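/- Let b > 0 and let Z₁ and Z₂ be independent real random variables, where Z₁ has the Laplace distribution with scale 2b and Z₂ has the Laplace distribution with scale b. Then for every constant C > 0, P(Z₁ ≥ Z₂ − C) = 1 − (2/3)·exp(−C/(2b)) + (1/6)·exp(−C/b). -/

import Mathlib

open MeasureTheory ProbabilityTheory Real

/-- A real random variable `Z` has the Laplace distribution with scale `b > 0` (with respect to
the probability measure `P`) if it is measurable and its law has density
`x ↦ (1/(2b)) · exp(−|x|/b)` with respect to Lebesgue measure. -/
def HasLaplaceLaw {Ω : Type*} [MeasurableSpace Ω] (P : Measure Ω) (Z : Ω → ℝ) (b : ℝ) : Prop :=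
  Measurable Z ∧
    P.map Z = volume.withDensity (fun x => ENNReal.ofReal ((1 / (2 * b)) * Real.exp (-|x| / b)))

open Set

section Aux
variable {b C : ℝ}


lemma expIoi_int {c : ℝ} (hc : 0 < c) (a : ℝ) :
    IntegrableOn (fun x => Real.exp (-(c * x))) (Ioi a) := by
  simpa [neg_mul] using exp_neg_integrableOn_Ioi a hc

lemma expIoi_val {c : ℝ} (hc : 0 < c) (a : ℝ) :
    ∫ x in Ioi a, Real.exp (-(c * x)) = Real.exp (-(c * a)) / c := by
  have h := integral_comp_mul_left_Ioi (fun y => Real.exp (-y)) a hc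
  simp only [smul_eq_mul] at h
  rw [h, integral_exp_neg_Ioi]
  ring

lemma expIic_int {c : ℝ} (hc : 0 < c) (a : ℝ) :
    IntegrableOn (fun x => Real.exp (c * x)) (Iic a) := by
  have A : MeasurableEmbedding fun x : ℝ => -x :=
    (Homeomorph.neg ℝ).isClosedEmbedding.measurableEmbedding
  have hres : (volume : Measure ℝ).restrict (Iic a)
      = Measure.map (fun x : ℝ => -x) (volume.restrict (Ici (-a))) := by
    conv_lhs => rw [← Measure.map_neg_eq_self (volume : Measure ℝ)]
    rw [Measure.restrict_map A.measurable measurableSet_Iic]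
    congr 1
    ext x
    simp
  unfold IntegrableOn
  rw [hres, A.integrable_map_iff]
  have : IntegrableOn (fun x : ℝ => Real.exp (-(c * x))) (Ici (-a)) := by
    rw [integrableOn_Ici_iff_integrableOn_Ioi]
    exact expIoi_int hc _
  simpa [Function.comp_def, mul_neg] using this.integrable

lemma expIic_val {c : ℝ} (hc : 0 < c) (a : ℝ) :
    ∫ x in Iic a, Real.exp (c * x) = Real.exp (c * a) / c := by
  have h := integral_comp_neg_Iic a (fun y => Real.exp (-(c * y)))
  simp only [mul_neg, neg_neg] at h
  rw [h, expIoi_val hc]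
  simp [mul_neg]

lemma intervalInt_exp {c : ℝ} (hc : c ≠ 0) (u v : ℝ) :
    ∫ x in u..v, Real.exp (c * x) = (Real.exp (c * v) - Real.exp (c * u)) / c := by
  have hderiv : ∀ x ∈ Set.uIcc u v, HasDerivAt (fun y => Real.exp (c * y) / c) (Real.exp (c * x)) x := by
    intro x _
    have h1 : HasDerivAt (fun y : ℝ => c * y) c x := by
      simpa using (hasDerivAt_id x).const_mul c
    have h2 := (Real.hasDerivAt_exp (c * x)).comp x h1
    have h3 := h2.div_const c
    simpa [mul_comm, mul_div_assoc, mul_div_cancel_left₀ _ hc] using h3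
  have hint : IntervalIntegrable (fun x => Real.exp (c * x)) volume u v :=
    (Real.continuous_exp.comp (continuous_const.mul continuous_id)).intervalIntegrable u v
  rw [intervalIntegral.integral_eq_sub_of_hasDerivAt hderiv hint]
  ring


noncomputable def lapF (b t : ℝ) : ℝ := if t ≤ 0 then Real.exp (t / b) / 2 else 1 - Real.exp (-t / b) / 2

lemma lapF_nonneg {b : ℝ} (hb : 0 < b) (t : ℝ) : 0 ≤ lapF b t := by
  unfold lapF
  split_ifs with h
  · positivity
  · have : Real.exp (-t / b) ≤ 1 := by
      rw [Real.exp_le_one_iff]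
      push_neg at h
      exact div_nonpos_of_nonpos_of_nonneg (by linarith) hb.le
    linarith

lemma lapF_le_one {b : ℝ} (hb : 0 < b) (t : ℝ) : lapF b t ≤ 1 := by
  unfold lapF
  split_ifs with h
  · have : Real.exp (t / b) ≤ 1 := by
      rw [Real.exp_le_one_iff]
      exact div_nonpos_of_nonpos_of_nonneg h hb.le
    linarith
  · have := Real.exp_pos (-t / b); linarith

lemma lapF_measurable (b : ℝ) : Measurable (lapF b) := by
  unfold lapF
  exact Measurable.ite measurableSet_Iic (by fun_prop) (by fun_prop)

lemma lap_dens_nonneg {b : ℝ} (hb : 0 < b) (x : ℝ) : 0 ≤ 1 / (2 * b) * Real.exp (-|x| / b) := by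
  positivity

lemma lap_int_Iic {b : ℝ} (hb : 0 < b) (t : ℝ) (ht : t ≤ 0) :
    ∫ x in Iic t, 1 / (2 * b) * Real.exp (-|x| / b) = Real.exp (t / b) / 2 := by
  have heq : EqOn (fun x => 1 / (2 * b) * Real.exp (-|x| / b))
      (fun x => 1 / (2 * b) * Real.exp ((1 / b) * x)) (Iic t) := by
    intro x hx
    have hx0 : x ≤ 0 := le_trans hx ht
    simp only [abs_of_nonpos hx0]
    ring_nf
  rw [setIntegral_congr_fun measurableSet_Iic heq, integral_const_mul,
    expIic_val (by positivity : (0:ℝ) < 1 / b)]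
  field_simp

lemma lap_integrableOn_Iic {b : ℝ} (hb : 0 < b) (t : ℝ) (ht : t ≤ 0) :
    IntegrableOn (fun x => 1 / (2 * b) * Real.exp (-|x| / b)) (Iic t) := by
  have heq : EqOn (fun x => 1 / (2 * b) * Real.exp ((1 / b) * x))
      (fun x => 1 / (2 * b) * Real.exp (-|x| / b)) (Iic t) := by
    intro x hx
    have hx0 : x ≤ 0 := le_trans hx ht
    simp only [abs_of_nonpos hx0]
    ring_nf
  exact IntegrableOn.congr_fun ((expIic_int (by positivity : (0:ℝ) < 1 / b) t).const_mul _)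
    heq measurableSet_Iic

lemma lap_integrableOn_Ioi {b : ℝ} (hb : 0 < b) (t : ℝ) (ht : 0 ≤ t) :
    IntegrableOn (fun x => 1 / (2 * b) * Real.exp (-|x| / b)) (Ioi t) := by
  have heq : EqOn (fun x => 1 / (2 * b) * Real.exp (-((1 / b) * x)))
      (fun x => 1 / (2 * b) * Real.exp (-|x| / b)) (Ioi t) := by
    intro x hx
    have hx0 : 0 ≤ x := le_trans ht (le_of_lt hx)
    simp only [abs_of_nonneg hx0]
    ring_nf
  exact IntegrableOn.congr_fun ((expIoi_int (by positivity : (0:ℝ) < 1 / b) t).const_mul _)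
    heq measurableSet_Ioi

lemma lap_dens_continuous (b : ℝ) : Continuous (fun x : ℝ => 1 / (2 * b) * Real.exp (-|x| / b)) := by
  fun_prop

lemma lap_int_Ioc {b : ℝ} (hb : 0 < b) (t : ℝ) (ht : 0 ≤ t) :
    ∫ x in Ioc 0 t, 1 / (2 * b) * Real.exp (-|x| / b) = (1 - Real.exp (-t / b)) / 2 := by
  have heq : EqOn (fun x => 1 / (2 * b) * Real.exp (-|x| / b))
      (fun x => 1 / (2 * b) * Real.exp ((-(1 / b)) * x)) (Ioc 0 t) := by
    intro x hx
    have hx0 : 0 ≤ x := le_of_lt hx.1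
    simp only [abs_of_nonneg hx0]
    ring_nf
  rw [setIntegral_congr_fun measurableSet_Ioc heq,
    ← intervalIntegral.integral_of_le ht, intervalIntegral.integral_const_mul,
    intervalInt_exp (by simp [hb.ne'] : -(1/b) ≠ (0:ℝ))]
  rw [show -(1/b) * t = -t/b by ring, show -(1/b) * 0 = (0:ℝ)/b by ring]
  simp
  field_simp
  ring

lemma lap_measure_Iic {b : ℝ} (hb : 0 < b) (t : ℝ) :
    (volume.withDensity fun x => ENNReal.ofReal (1 / (2 * b) * Real.exp (-|x| / b))) (Iic t)
      = ENNReal.ofReal (lapF b t) := by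
  have hint : IntegrableOn (fun x => 1 / (2 * b) * Real.exp (-|x| / b)) (Iic t) := by
    rcases le_or_gt t 0 with h | h
    · exact lap_integrableOn_Iic hb t h
    · rw [← Set.Iic_union_Ioc_eq_Iic h.le]
      exact (lap_integrableOn_Iic hb 0 le_rfl).union ((lap_dens_continuous b).integrableOn_Ioc)
  rw [withDensity_apply _ measurableSet_Iic,
    ← ofReal_integral_eq_lintegral_ofReal hint
      (Filter.Eventually.of_forall fun x => lap_dens_nonneg hb x)]
  congr 1
  rcases le_or_gt t 0 with h | h
  · rw [lap_int_Iic hb t h]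
    simp [lapF, h]
  · rw [← Set.Iic_union_Ioc_eq_Iic h.le,
      setIntegral_union (Set.Iic_disjoint_Ioc le_rfl) measurableSet_Ioc
        (lap_integrableOn_Iic hb 0 le_rfl) ((lap_dens_continuous b).integrableOn_Ioc),
      lap_int_Iic hb 0 le_rfl, lap_int_Ioc hb t h.le]
    simp [lapF, not_le.mpr h]
    ring

lemma lap_integrable {b : ℝ} (hb : 0 < b) :
    Integrable (fun x => 1 / (2 * b) * Real.exp (-|x| / b)) := by
  rw [← integrableOn_univ, ← Set.Iic_union_Ioi (a := (0:ℝ))]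
  exact (lap_integrableOn_Iic hb 0 le_rfl).union (lap_integrableOn_Ioi hb 0 le_rfl)

section MainIntegral

variable {b C : ℝ}

lemma phi_eqOn1 (hb : 0 < b) (hC : 0 < C) :
    EqOn (fun x => Real.exp (C / b) / (8 * b) * Real.exp (3 / (2 * b) * x))
      (fun x => 1 / (2 * (2 * b)) * Real.exp (-|x| / (2 * b)) * lapF b (x + C))
      (Iic (-C)) := by
  intro x hx
  have hx0 : x ≤ 0 := le_trans hx (by linarith)
  have hxC : x + C ≤ 0 := by simp only [mem_Iic] at hx; linarith
  simp only [lapF, abs_of_nonpos hx0, neg_neg, if_pos hxC]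
  have h1 : Real.exp (x / (2 * b)) * Real.exp ((x + C) / b)
      = Real.exp (C / b) * Real.exp (3 / (2 * b) * x) := by
    rw [← Real.exp_add, ← Real.exp_add]
    congr 1
    field_simp
    ring
  linear_combination (-(1 / (8 * b))) * h1

lemma phi_eqOn2 (hb : 0 < b) (hC : 0 < C) :
    EqOn (fun x => 1 / (4 * b) * Real.exp (1 / (2 * b) * x)
        - Real.exp (-C / b) / (8 * b) * Real.exp (-(1 / (2 * b)) * x))
      (fun x => 1 / (2 * (2 * b)) * Real.exp (-|x| / (2 * b)) * lapF b (x + C))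
      (Ioc (-C) 0) := by
  intro x hx
  have hx0 : x ≤ 0 := hx.2
  have hxC : ¬ (x + C ≤ 0) := by have := hx.1; push_neg; linarith
  simp only [lapF, abs_of_nonpos hx0, neg_neg, if_neg hxC]
  have h2 : Real.exp (x / (2 * b)) * Real.exp (-(x + C) / b)
      = Real.exp (-C / b) * Real.exp (-(1 / (2 * b)) * x) := by
    rw [← Real.exp_add, ← Real.exp_add]
    congr 1
    field_simp
    ring
  have h3 : Real.exp (x / (2 * b)) = Real.exp (1 / (2 * b) * x) := by
    congr 1; ring
  linear_combination (-(1 / (4 * b))) * h3 + (1 / (8 * b)) * h2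

lemma phi_eqOn3 (hb : 0 < b) (hC : 0 < C) :
    EqOn (fun x => 1 / (4 * b) * Real.exp (-(1 / (2 * b) * x))
        - Real.exp (-C / b) / (8 * b) * Real.exp (-(3 / (2 * b) * x)))
      (fun x => 1 / (2 * (2 * b)) * Real.exp (-|x| / (2 * b)) * lapF b (x + C))
      (Ioi 0) := by
  intro x hx
  have hx0 : 0 ≤ x := le_of_lt hx
  have hxC : ¬ (x + C ≤ 0) := by push_neg; simp only [mem_Ioi] at hx; linarith
  simp only [lapF, abs_of_nonneg hx0, if_neg hxC]
  have h4 : Real.exp (-x / (2 * b)) = Real.exp (-(1 / (2 * b) * x)) := by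
    congr 1; ring
  have h5 : Real.exp (-x / (2 * b)) * Real.exp (-(x + C) / b)
      = Real.exp (-C / b) * Real.exp (-(3 / (2 * b) * x)) := by
    rw [← Real.exp_add, ← Real.exp_add]
    congr 1
    field_simp
    ring
  linear_combination (-(1 / (4 * b))) * h4 + (1 / (8 * b)) * h5

lemma J1 (hb : 0 < b) (hC : 0 < C) :
    ∫ x in Iic (-C), Real.exp (C / b) / (8 * b) * Real.exp (3 / (2 * b) * x)
      = 1 / 12 * Real.exp (-C / (2 * b)) := by
  rw [integral_const_mul, expIic_val (by positivity : (0:ℝ) < 3 / (2 * b))]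
  rw [show 3 / (2 * b) * (-C) = -(3 * C) / (2 * b) by ring]
  have k : Real.exp (C / b) * Real.exp (-(3 * C) / (2 * b)) = Real.exp (-C / (2 * b)) := by
    rw [← Real.exp_add]; congr 1; field_simp; ring
  rw [← k]
  field_simp
  ring

lemma J2 (hb : 0 < b) (hC : 0 < C) :
    ∫ x in Ioc (-C) 0, (1 / (4 * b) * Real.exp (1 / (2 * b) * x)
        - Real.exp (-C / b) / (8 * b) * Real.exp (-(1 / (2 * b)) * x))
      = 1 / 2 - 3 / 4 * Real.exp (-C / (2 * b)) + 1 / 4 * Real.exp (-C / b) := by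
  have hi1 : IntervalIntegrable (fun x => 1 / (4 * b) * Real.exp (1 / (2 * b) * x)) volume (-C) 0 :=
    (Continuous.intervalIntegrable (by fun_prop) _ _)
  have hi2 : IntervalIntegrable (fun x => Real.exp (-C / b) / (8 * b) * Real.exp (-(1 / (2 * b)) * x)) volume (-C) 0 :=
    (Continuous.intervalIntegrable (by fun_prop) _ _)
  rw [← intervalIntegral.integral_of_le (by linarith : -C ≤ (0:ℝ)),
    intervalIntegral.integral_sub hi1 hi2,
    intervalIntegral.integral_const_mul, intervalIntegral.integral_const_mul,
    intervalInt_exp (by positivity : 1 / (2 * b) ≠ 0),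
    intervalInt_exp (by simp [hb.ne'] : -(1 / (2 * b)) ≠ (0:ℝ))]
  rw [show (1:ℝ) / (2 * b) * -C = -C / (2 * b) by ring,
    show -((1:ℝ) / (2 * b)) * -C = C / (2 * b) by ring,
    show -((1:ℝ) / (2 * b)) * 0 = (0:ℝ) by ring]
  simp only [Real.exp_zero]
  have k : Real.exp (-C / b) * Real.exp (C / (2 * b)) = Real.exp (-C / (2 * b)) := by
    rw [← Real.exp_add]; congr 1; field_simp; ring
  rw [← k]
  rw [show (1:ℝ) / (2 * b) * 0 = 0 by ring, Real.exp_zero]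
  field_simp
  ring

lemma J3 (hb : 0 < b) (hC : 0 < C) :
    ∫ x in Ioi 0, (1 / (4 * b) * Real.exp (-(1 / (2 * b) * x))
        - Real.exp (-C / b) / (8 * b) * Real.exp (-(3 / (2 * b) * x)))
      = 1 / 2 - 1 / 12 * Real.exp (-C / b) := by
  rw [integral_sub (((expIoi_int (by positivity : (0:ℝ) < 1 / (2 * b)) 0).const_mul _))
      (((expIoi_int (by positivity : (0:ℝ) < 3 / (2 * b)) 0).const_mul _)),
    integral_const_mul, integral_const_mul,
    expIoi_val (by positivity : (0:ℝ) < 1 / (2 * b)),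
    expIoi_val (by positivity : (0:ℝ) < 3 / (2 * b))]
  simp only [mul_zero, neg_zero, Real.exp_zero]
  field_simp
  ring

end MainIntegral

lemma phi_intOn1 (hb : 0 < b) (hC : 0 < C) :
    IntegrableOn (fun x => 1 / (2 * (2 * b)) * Real.exp (-|x| / (2 * b)) * lapF b (x + C))
      (Iic (-C)) :=
  IntegrableOn.congr_fun ((expIic_int (by positivity : (0:ℝ) < 3 / (2 * b)) (-C)).const_mul _)
    (phi_eqOn1 hb hC) measurableSet_Iic

lemma phi_intOn2 (hb : 0 < b) (hC : 0 < C) :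
    IntegrableOn (fun x => 1 / (2 * (2 * b)) * Real.exp (-|x| / (2 * b)) * lapF b (x + C))
      (Ioc (-C) 0) :=
  IntegrableOn.congr_fun ((Continuous.integrableOn_Ioc (by fun_prop)))
    (phi_eqOn2 hb hC) measurableSet_Ioc

lemma phi_intOn3 (hb : 0 < b) (hC : 0 < C) :
    IntegrableOn (fun x => 1 / (2 * (2 * b)) * Real.exp (-|x| / (2 * b)) * lapF b (x + C))
      (Ioi 0) :=
  IntegrableOn.congr_fun
    (((expIoi_int (by positivity : (0:ℝ) < 1 / (2 * b)) 0).const_mul _).sub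
      ((expIoi_int (by positivity : (0:ℝ) < 3 / (2 * b)) 0).const_mul _))
    (phi_eqOn3 hb hC) measurableSet_Ioi

lemma phi_intOn_Iic (hb : 0 < b) (hC : 0 < C) :
    IntegrableOn (fun x => 1 / (2 * (2 * b)) * Real.exp (-|x| / (2 * b)) * lapF b (x + C))
      (Iic 0) := by
  rw [← Set.Iic_union_Ioc_eq_Iic (by linarith : -C ≤ (0:ℝ))]
  exact (phi_intOn1 hb hC).union (phi_intOn2 hb hC)

lemma phi_integrable (hb : 0 < b) (hC : 0 < C) :
    Integrable (fun x => 1 / (2 * (2 * b)) * Real.exp (-|x| / (2 * b)) * lapF b (x + C)) := by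
  rw [← integrableOn_univ, ← Set.Iic_union_Ioi (a := (0:ℝ))]
  exact (phi_intOn_Iic hb hC).union (phi_intOn3 hb hC)

lemma main_integral (hb : 0 < b) (hC : 0 < C) :
    ∫ x, 1 / (2 * (2 * b)) * Real.exp (-|x| / (2 * b)) * lapF b (x + C)
      = 1 - 2 / 3 * Real.exp (-C / (2 * b)) + 1 / 6 * Real.exp (-C / b) := by
  rw [← setIntegral_univ, ← Set.Iic_union_Ioi (a := (0:ℝ)),
    setIntegral_union (Set.Iic_disjoint_Ioi le_rfl) measurableSet_Ioi
      (phi_intOn_Iic hb hC) (phi_intOn3 hb hC),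
    ← Set.Iic_union_Ioc_eq_Iic (by linarith : -C ≤ (0:ℝ)),
    setIntegral_union (Set.Iic_disjoint_Ioc le_rfl) measurableSet_Ioc
      (phi_intOn1 hb hC) (phi_intOn2 hb hC),
    ← setIntegral_congr_fun measurableSet_Iic (phi_eqOn1 hb hC),
    ← setIntegral_congr_fun measurableSet_Ioc (phi_eqOn2 hb hC),
    ← setIntegral_congr_fun measurableSet_Ioi (phi_eqOn3 hb hC),
    J1 hb hC, J2 hb hC, J3 hb hC]
  ring

end Aux

theorem laplace_ge_diff_prob {Ω : Type*} [MeasurableSpace Ω] (P : Measure Ω)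
    [IsProbabilityMeasure P] (b : ℝ) (hb : 0 < b) (Z₁ Z₂ : Ω → ℝ)
    (h₁ : HasLaplaceLaw P Z₁ (2 * b)) (h₂ : HasLaplaceLaw P Z₂ b)
    (hind : IndepFun Z₁ Z₂ P) (C : ℝ) (hC : 0 < C) :
    P {ω | Z₁ ω ≥ Z₂ ω - C} =
      ENNReal.ofReal
        (1 - (2 / 3) * Real.exp (-C / (2 * b)) + (1 / 6) * Real.exp (-C / b)) := by
  obtain ⟨hm1, hl1⟩ := h₁
  obtain ⟨hm2, hl2⟩ := h₂
  have hprob1 : IsProbabilityMeasure (P.map Z₁) := Measure.isProbabilityMeasure_map hm1.aemeasurable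
  have hprob2 : IsProbabilityMeasure (P.map Z₂) := Measure.isProbabilityMeasure_map hm2.aemeasurable
  have hS : MeasurableSet {p : ℝ × ℝ | p.2 - C ≤ p.1} :=
    measurableSet_le (measurable_snd.sub measurable_const) measurable_fst
  have hmap : P.map (fun ω => (Z₁ ω, Z₂ ω)) = (P.map Z₁).prod (P.map Z₂) :=
    (ProbabilityTheory.indepFun_iff_map_prod_eq_prod_map_map hm1.aemeasurable
      hm2.aemeasurable).mp hind
  have step1 : P {ω | Z₁ ω ≥ Z₂ ω - C}
      = (P.map (fun ω => (Z₁ ω, Z₂ ω))) {p : ℝ × ℝ | p.2 - C ≤ p.1} := by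
    rw [Measure.map_apply (hm1.prodMk hm2) hS]
    rfl
  rw [step1, hmap, Measure.prod_apply hS]
  have hslice : ∀ x : ℝ, (P.map Z₂) (Prod.mk x ⁻¹' {p : ℝ × ℝ | p.2 - C ≤ p.1})
      = ENNReal.ofReal (lapF b (x + C)) := by
    intro x
    have : Prod.mk x ⁻¹' {p : ℝ × ℝ | p.2 - C ≤ p.1} = Iic (x + C) := by
      ext y
      simp [sub_le_iff_le_add]
    rw [this, hl2, lap_measure_Iic hb]
  simp_rw [hslice]
  rw [hl1, lintegral_withDensity_eq_lintegral_mul _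
    (by fun_prop : Measurable fun x => ENNReal.ofReal (1 / (2 * (2 * b)) * Real.exp (-|x| / (2 * b))))
    (by
      have : Measurable fun x : ℝ => lapF b (x + C) :=
        (lapF_measurable b).comp (measurable_id.add_const C)
      exact ENNReal.measurable_ofReal.comp this)]
  have hpt : ∀ x : ℝ,
      (ENNReal.ofReal (1 / (2 * (2 * b)) * Real.exp (-|x| / (2 * b)))
        * ENNReal.ofReal (lapF b (x + C)))
      = ENNReal.ofReal (1 / (2 * (2 * b)) * Real.exp (-|x| / (2 * b)) * lapF b (x + C)) := by
    intro x
    rw [← ENNReal.ofReal_mul (by positivity)]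
  simp_rw [Pi.mul_apply, hpt]
  rw [← ofReal_integral_eq_lintegral_ofReal (phi_integrable hb hC)
    (Filter.Eventually.of_forall fun x => mul_nonneg (by positivity) (lapF_nonneg hb _)),
    main_integral hb hC]
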